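/- Suppose g ≡ 0 and dom φ = ℝⁿ. Let x ∈ ℝⁿ, λ > 0, c₁ ∈ (0,1), let y be the minimizer over ℝⁿ of u ↦ ⟨∇f(x), u − x⟩ + (1/(2λ))⟨∇²φ(x)(u − x), u − x⟩, set d = y − x, and assume d ≠ 0 and f is bounded below on ℝⁿ. Define A(t) = f(x + t d) − f(x) − c₁ t (⟨∇f(x), d⟩ + (1/(2λ))⟨∇²φ(x)d, d⟩). Then there exist positive numbers t_α < t_β such that A(t) < 0 for all t ∈ (0, t_α) and A(t) ≥ 0 for all t > t_β. -/

import Mathlib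

open Set Filter Topology
open scoped RealInnerProductSpace

/-- existence of thresholds `t_α < t_β` for the Armijo-type
function `A(t)` in the case `g ≡ 0` and `dom φ = ℝⁿ`. -/
theorem stmt13
    {E : Type*} [NormedAddCommGroup E] [InnerProductSpace ℝ E] [FiniteDimensional ℝ E]
    (φ f : E → ℝ) (φ' f' : E → E) (Hφ : E → E →L[ℝ] E) (σ : ℝ) (hσ : 0 < σ)
    (hφconv : ConvexOn ℝ Set.univ φ)
    (hφ'grad : ∀ z, HasGradientAt φ (φ' z) z)
    (hφ'' : ∀ z, HasFDerivAt φ' (Hφ z) z)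
    (hφ''cont : Continuous Hφ)
    (hφstrong : ∀ z u : E, σ * ‖u‖ ^ 2 ≤ ⟪Hφ z u, u⟫)
    (hf'grad : ∀ z, HasGradientAt f (f' z) z)
    (hf'cont : Continuous f')
    (hfbdd : BddBelow (Set.range f))
    (x : E) (lam : ℝ) (hlam : 0 < lam) (c₁ : ℝ) (hc₁ : c₁ ∈ Ioo (0 : ℝ) 1)
    (y : E)
    (hymin : IsMinOn (fun u => ⟪f' x, u - x⟫ +
      (1 / (2 * lam)) * ⟪Hφ x (u - x), u - x⟫) Set.univ y)
    (d : E) (hd : d = y - x) (hdne : d ≠ 0) :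
    ∃ tα tβ : ℝ, 0 < tα ∧ tα < tβ ∧
      (∀ t ∈ Ioo (0 : ℝ) tα,
        f (x + t • d) - f x - c₁ * t *
          (⟪f' x, d⟫ + (1 / (2 * lam)) * ⟪Hφ x d, d⟫) < 0) ∧
      (∀ t : ℝ, tβ < t →
        0 ≤ f (x + t • d) - f x - c₁ * t *
          (⟪f' x, d⟫ + (1 / (2 * lam)) * ⟪Hφ x d, d⟫)) := by
  obtain ⟨hc₁0, hc₁1⟩ := hc₁
  have hdnorm : 0 < ‖d‖ := norm_pos_iff.mpr hdne
  have hq : 0 < ⟪Hφ x d, d⟫ :=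
    lt_of_lt_of_le (by positivity) (hφstrong x d)
  have hil : 0 < 1 / (2 * lam) := by positivity
  set Del : ℝ := ⟪f' x, d⟫ + (1 / (2 * lam)) * ⟪Hφ x d, d⟫ with hDel
  clear_value Del
  -- Δ < 0
  have hyx : y - x = d := by rw [hd]
  have hmin := hymin (Set.mem_univ (x + (1/2 : ℝ) • d))
  simp only [hyx, Set.mem_setOf_eq] at hmin
  have hsimp : x + (1/2 : ℝ) • d - x = (1/2 : ℝ) • d := by abel
  rw [hsimp] at hmin
  have h2 : ⟪f' x, ((1:ℝ)/2) • d⟫ = (1/2 : ℝ) * ⟪f' x, d⟫ := real_inner_smul_right _ _ _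
  have h3 : ⟪Hφ x (((1:ℝ)/2) • d), ((1:ℝ)/2) • d⟫ = (1/4 : ℝ) * ⟪Hφ x d, d⟫ := by
    rw [map_smul, real_inner_smul_left, real_inner_smul_right]; ring
  rw [h2, h3] at hmin
  have hDelneg : Del < 0 := by
    rw [hDel]; nlinarith [hmin, hq, hil]
  have haneg : ⟪f' x, d⟫ - c₁ * Del < 0 := by
    have ha : ⟪f' x, d⟫ = Del - (1 / (2 * lam)) * ⟪Hφ x d, d⟫ := by rw [hDel]; ring
    have h4 : Del < c₁ * Del := by nlinarith [mul_pos (sub_pos.mpr hc₁1) (neg_pos.mpr hDelneg)]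
    linarith [mul_pos hil hq, h4]
  -- derivative of A at 0
  have hline : HasDerivAt (fun t : ℝ => x + t • d) d 0 := by
    have := ((hasDerivAt_id (0:ℝ)).smul_const d).const_add x
    simpa using this
  have hcomp : HasDerivAt (fun t : ℝ => f (x + t • d)) ⟪f' x, d⟫ 0 := by
    have hF := (hf'grad (x + (0:ℝ) • d)).hasFDerivAt
    have := hF.comp_hasDerivAt (0:ℝ) hline
    simpa [InnerProductSpace.toDual_apply_apply, Function.comp_def] using this
  set A : ℝ → ℝ := fun t => f (x + t • d) - f x - c₁ * t * Del with hA
  have hA0 : A 0 = 0 := by simp [hA]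
  have hAderiv : HasDerivAt A (⟪f' x, d⟫ - c₁ * Del) 0 := by
    have h1 : HasDerivAt (fun t : ℝ => c₁ * t * Del) (c₁ * 1 * Del) 0 :=
      ((hasDerivAt_id (0:ℝ)).const_mul c₁).mul_const Del
    have := (hcomp.sub_const (f x)).sub h1
    simpa [hA, Function.comp_def, Pi.sub_def] using this
  -- small-t negativity
  have hslope := hasDerivAt_iff_tendsto_slope.mp hAderiv
  have hev : ∀ᶠ t in 𝓝[>] (0:ℝ), slope A 0 t < 0 := by
    have := hslope.eventually_lt_const haneg
    exact nhdsWithin_mono 0 (fun t (ht : t ∈ Ioi (0:ℝ)) => ne_of_gt ht) this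
  obtain ⟨tα, htα, hsub⟩ := mem_nhdsGT_iff_exists_Ioo_subset.mp hev
  have htαpos : 0 < tα := htα
  -- lower bound for f
  obtain ⟨m, hm⟩ := hfbdd
  have hmle : ∀ z, m ≤ f z := fun z => hm (Set.mem_range_self z)
  refine ⟨tα, max (tα + 1) ((f x - m) / (c₁ * (-Del))), htαpos, ?_, ?_, ?_⟩
  · exact lt_of_lt_of_le (by linarith) (le_max_left _ _)
  · intro t ht
    have hs : slope A 0 t < 0 := hsub ht
    rw [slope_def_field] at hs
    have : (A t - A 0) / (t - 0) < 0 := by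
      simpa [div_eq_inv_mul, mul_comm] using hs
    rw [hA0, sub_zero, sub_zero] at this
    rcases div_neg_iff.mp this with ⟨_, h⟩ | ⟨h, _⟩
    · linarith [ht.1]
    · exact h
  · intro t ht
    have hcD : 0 < c₁ * (-Del) := by nlinarith
    have ht2 : (f x - m) / (c₁ * (-Del)) < t := lt_of_le_of_lt (le_max_right _ _) ht
    have ht3 : f x - m < t * (c₁ * (-Del)) := (div_lt_iff₀ hcD).mp ht2
    have := hmle (x + t • d)
    nlinarith
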